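/- arXiv:2011.14643 — 6 statements merged into one kernel-verified Lean document; each statement's English description precedes it below -/
import Mathlib

section
/- Let μ_R be the Rayleigh distribution on ℝ (density z·e^{−z²/2}·1_{[0,∞)}(z)) and μ_Θ the uniform probability measure on [0, 2π). Then for every t ∈ ℝ, the pushforward of μ_R ⊗ μ_Θ under the map (z, θ) ↦ z·cos(t − θ) equals the standard Gaussian measure N(0,1) on ℝ. That is, the random variable ξ(t) = ζ·cos(t − θ), with ζ Rayleigh and θ uniform on [0,2π) independent, is normally distributed with mean 0 and variance 1 for every t. -/
open MeasureTheory Set Real ProbabilityTheory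
open scoped NNReal ENNReal

noncomputable def rayDens (z : ℝ) : ℝ :=
  z * Real.exp (-z^2/2) * Set.indicator (Ici (0:ℝ)) (fun _ => (1:ℝ)) z

lemma rayDens_eq : rayDens = Set.indicator (Ici (0:ℝ)) (fun z => z * Real.exp (-z^2/2)) := by
  funext z
  by_cases hz : z ∈ Ici (0:ℝ) <;> simp [rayDens, indicator, hz]

lemma rayDens_nonneg (z : ℝ) : 0 ≤ rayDens z := by
  rw [rayDens_eq]
  by_cases hz : z ∈ Ici (0:ℝ)
  · simp only [indicator, hz, if_true]
    exact mul_nonneg hz (Real.exp_pos _).le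
  · simp [indicator, hz]

lemma measurable_rayDens : Measurable rayDens := by
  rw [rayDens_eq]
  exact (measurable_id.mul ((measurable_id.pow_const 2).neg.div_const 2).exp).indicator
    measurableSet_Ici

lemma integrable_aux : Integrable (fun z : ℝ => z * Real.exp (-(1/2 : ℝ) * z ^ 2)) :=
  integrable_mul_exp_neg_mul_sq (by norm_num)

lemma integrable_rayDens : Integrable rayDens := by
  rw [rayDens_eq]
  have : (fun z : ℝ => z * Real.exp (-z^2/2)) = fun z : ℝ => z * Real.exp (-(1/2 : ℝ) * z ^ 2) := by
    funext z; ring_nf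
  rw [this]
  exact integrable_aux.indicator measurableSet_Ici

lemma integral_rayDens : ∫ z, rayDens z = 1 := by
  rw [rayDens_eq, MeasureTheory.integral_indicator measurableSet_Ici,
    MeasureTheory.setIntegral_congr_set Ioi_ae_eq_Ici.symm]
  have hderiv : ∀ x ∈ Ici (0:ℝ), HasDerivAt (fun z : ℝ => -Real.exp (-z^2/2))
      (x * Real.exp (-x^2/2)) x := by
    intro x _
    have h1 : HasDerivAt (fun z : ℝ => -z^2/2) (-x) x := by
      have := ((hasDerivAt_pow 2 x).neg.div_const 2)
      refine this.congr_deriv ?_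
      push_cast; ring
    have := (h1.exp).neg
    refine this.congr_deriv ?_
    ring
  have hint : IntegrableOn (fun x : ℝ => x * Real.exp (-x^2/2)) (Ioi 0) := by
    have : (fun z : ℝ => z * Real.exp (-z^2/2)) = fun z : ℝ => z * Real.exp (-(1/2:ℝ) * z ^ 2) := by
      funext z; ring_nf
    rw [this]
    exact integrable_aux.integrableOn
  have htend : Filter.Tendsto (fun z : ℝ => -Real.exp (-z^2/2)) Filter.atTop (nhds 0) := by
    rw [← neg_zero]
    apply Filter.Tendsto.neg
    apply Real.tendsto_exp_atBot.comp
    have h2 : Filter.Tendsto (fun z : ℝ => -z^2/2) Filter.atTop Filter.atBot := by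
      have := (Filter.tendsto_pow_atTop (two_ne_zero)).atTop_div_const
        (by norm_num : (0:ℝ) < 2)
      have := Filter.tendsto_neg_atTop_atBot.comp this
      convert this using 2 with z
      simp [Function.comp]; ring
    exact h2
  have := integral_Ioi_of_hasDerivAt_of_tendsto' hderiv hint htend
  simp at this
  rw [show (fun x : ℝ => x * Real.exp (-x^2/2)) = fun x : ℝ => x * Real.exp (-x^2/2) from rfl]
  rw [this]

lemma angular_shift (φ : ℝ → ℝ) (t z : ℝ) :
    ∫ θ in Ico 0 (2*π), φ (z * Real.cos (t - θ)) = ∫ θ in Ioo (-π) π, φ (z * Real.cos θ) := by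
  have h2π : (0:ℝ) ≤ 2*π := by positivity
  have per : Function.Periodic (fun θ : ℝ => φ (z * Real.cos θ)) (2*π) := fun θ => by
    simp [Real.cos_add_two_pi]
  calc ∫ θ in Ico 0 (2*π), φ (z * Real.cos (t - θ))
      = ∫ θ in Ioc 0 (2*π), φ (z * Real.cos (t - θ)) :=
        MeasureTheory.setIntegral_congr_set Ico_ae_eq_Ioc
    _ = ∫ θ in (0:ℝ)..(2*π), φ (z * Real.cos (t - θ)) :=
        (intervalIntegral.integral_of_le h2π).symm
    _ = ∫ θ in (t - 2*π)..(t - 0), φ (z * Real.cos θ) :=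
        (intervalIntegral.integral_comp_sub_left (fun u => φ (z * Real.cos u)) t)
    _ = ∫ θ in (t - 2*π)..((t - 2*π) + 2*π), φ (z * Real.cos θ) := by norm_num
    _ = ∫ θ in (-π)..((-π) + 2*π), φ (z * Real.cos θ) :=
        per.intervalIntegral_add_eq _ _
    _ = ∫ θ in (-π)..π, φ (z * Real.cos θ) := by congr 1; ring
    _ = ∫ θ in Ioc (-π) π, φ (z * Real.cos θ) := by
        rw [intervalIntegral.integral_of_le (by linarith [Real.pi_pos])]
    _ = ∫ θ in Ioo (-π) π, φ (z * Real.cos θ) :=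
        MeasureTheory.setIntegral_congr_set Ioo_ae_eq_Ioc.symm

lemma polar_eq (φ : ℝ → ℝ) (hφ : Continuous φ) (C : ℝ) (hC : ∀ x, |φ x| ≤ C) :
    ∫ z in Ioi (0:ℝ), (∫ θ in Ioo (-π) π, z * Real.exp (-z^2/2) * φ (z * Real.cos θ))
      = (∫ x, φ x * Real.exp (-x^2/2)) * Real.sqrt (2*π) := by
  set F : ℝ × ℝ → ℝ := fun q => φ q.1 * Real.exp (-(q.1^2 + q.2^2)/2) with hF
  have hFcont : Continuous F := by
    apply (hφ.comp continuous_fst).mul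
    exact (((continuous_fst.pow 2).add (continuous_snd.pow 2)).neg.div_const 2).rexp
  have hGsimp : ∀ p : ℝ × ℝ, p.1 • F (polarCoord.symm p)
      = p.1 * Real.exp (-p.1^2/2) * φ (p.1 * Real.cos p.2) := by
    intro p
    rw [polarCoord_symm_apply, hF]
    have : (p.1 * Real.cos p.2)^2 + (p.1 * Real.sin p.2)^2 = p.1^2 := by
      have := Real.sin_sq_add_cos_sq p.2
      nlinarith [this]
    simp only [smul_eq_mul, this]
    ring
  have hpolar := integral_comp_polarCoord_symm F
  rw [polarCoord_target] at hpolar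
  -- LHS rewriting
  have hInt : IntegrableOn (fun p : ℝ × ℝ => p.1 * Real.exp (-p.1^2/2) * φ (p.1 * Real.cos p.2))
      (Ioi (0:ℝ) ×ˢ Ioo (-π) π) volume := by
    rw [IntegrableOn, MeasureTheory.Measure.volume_eq_prod, ← Measure.prod_restrict]
    have h1 : Integrable (fun z : ℝ => |z| * Real.exp (-z^2/2) * C) := by
      have : (fun z : ℝ => |z| * Real.exp (-z^2/2) * C)
          = fun z : ℝ => |z * Real.exp (-(1/2:ℝ) * z^2)| * C := by
        funext z
        rw [abs_mul, abs_of_pos (Real.exp_pos _)]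
        ring_nf
      rw [this]
      exact integrable_aux.abs.mul_const C
    have hbound := MeasureTheory.Integrable.mul_prod
      (μ := volume.restrict (Ioi (0:ℝ))) (ν := volume.restrict (Ioo (-π) π))
      (g := fun _ : ℝ => (1:ℝ))
      h1.restrict ((MeasureTheory.integrableOn_const_iff (C := (1:ℝ))).mpr
        (Or.inr measure_Ioo_lt_top))
    apply Integrable.mono' hbound
    · apply Continuous.aestronglyMeasurable
      apply ((continuous_fst.mul
        ((continuous_fst.pow 2).neg.div_const 2).rexp)).mul
      exact hφ.comp (continuous_fst.mul (Real.continuous_cos.comp continuous_snd))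
    · refine Filter.Eventually.of_forall fun p => ?_
      rw [Real.norm_eq_abs, mul_one, abs_mul, abs_mul, abs_of_pos (Real.exp_pos _)]
      exact mul_le_mul_of_nonneg_left (hC _) (by positivity)
  calc ∫ z in Ioi (0:ℝ), (∫ θ in Ioo (-π) π, z * Real.exp (-z^2/2) * φ (z * Real.cos θ))
      = ∫ p in Ioi (0:ℝ) ×ˢ Ioo (-π) π,
          p.1 * Real.exp (-p.1^2/2) * φ (p.1 * Real.cos p.2) := by
        rw [MeasureTheory.Measure.volume_eq_prod] at hInt ⊢
        exact (MeasureTheory.setIntegral_prod _ hInt).symm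
    _ = ∫ p in Ioi (0:ℝ) ×ˢ Ioo (-π) π, p.1 • F (polarCoord.symm p) := by
        refine MeasureTheory.setIntegral_congr_fun
          (measurableSet_Ioi.prod measurableSet_Ioo) fun p _ => (hGsimp p).symm
    _ = ∫ p : ℝ × ℝ, F p := hpolar
    _ = (∫ x, φ x * Real.exp (-x^2/2)) * Real.sqrt (2*π) := by
        have : F = fun q : ℝ × ℝ =>
            (φ q.1 * Real.exp (-q.1^2/2)) * Real.exp (-q.2^2/2) := by
          funext q
          show φ q.1 * Real.exp (-(q.1^2+q.2^2)/2)
            = φ q.1 * Real.exp (-q.1^2/2) * Real.exp (-q.2^2/2)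
          rw [mul_assoc, ← Real.exp_add]
          congr 2
          ring
        have hg : ∫ y : ℝ, Real.exp (-y^2/2) = Real.sqrt (2*π) := by
          have h : (fun y : ℝ => Real.exp (-y^2/2)) = fun y : ℝ => Real.exp (-(1/2:ℝ) * y^2) := by
            funext y; ring_nf
          rw [h, integral_gaussian]
          rw [show π / (1/2:ℝ) = 2 * π by ring]
        calc ∫ p : ℝ × ℝ, F p
            = ∫ p : ℝ × ℝ, (φ p.1 * Real.exp (-p.1^2/2)) * Real.exp (-p.2^2/2)
              ∂((volume : Measure ℝ).prod volume) := by
              rw [← MeasureTheory.Measure.volume_eq_prod]; simp only [this]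
          _ = (∫ x, φ x * Real.exp (-x^2/2)) * ∫ y : ℝ, Real.exp (-y^2/2) :=
              MeasureTheory.integral_prod_mul (fun x => φ x * Real.exp (-x^2/2))
                (fun y => Real.exp (-y^2/2))
          _ = (∫ x, φ x * Real.exp (-x^2/2)) * Real.sqrt (2*π) := by rw [hg]

lemma muR_prob : IsProbabilityMeasure
    (volume.withDensity (fun z => ENNReal.ofReal (rayDens z))) := by
  constructor
  rw [MeasureTheory.withDensity_apply _ MeasurableSet.univ, Measure.restrict_univ,
    ← MeasureTheory.ofReal_integral_eq_lintegral_ofReal integrable_rayDens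
      (Filter.Eventually.of_forall rayDens_nonneg), integral_rayDens, ENNReal.ofReal_one]

lemma muTheta_prob : IsProbabilityMeasure
    ((ENNReal.ofReal (2 * π))⁻¹ • volume.restrict (Ico 0 (2 * π))) := by
  constructor
  rw [Measure.smul_apply, Measure.restrict_apply_univ, Real.volume_Ico, sub_zero, smul_eq_mul]
  refine ENNReal.inv_mul_cancel ?_ ENNReal.ofReal_ne_top
  simp only [ne_eq, ENNReal.ofReal_eq_zero, not_le]
  positivity

lemma integral_muR (g : ℝ → ℝ) :
    ∫ x, g x ∂(volume.withDensity (fun z => ENNReal.ofReal (rayDens z)))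
      = ∫ z, rayDens z * g z := by
  have h : (fun z => ENNReal.ofReal (rayDens z))
      = fun z => ((rayDens z).toNNReal : ENNReal) := rfl
  rw [h, integral_withDensity_eq_integral_smul
    (measurable_rayDens.real_toNNReal) g]
  congr 1
  funext z
  rw [NNReal.smul_def, smul_eq_mul, Real.coe_toNNReal _ (rayDens_nonneg z)]

lemma integral_muTheta (g : ℝ → ℝ) :
    ∫ x, g x ∂((ENNReal.ofReal (2 * π))⁻¹ • volume.restrict (Ico 0 (2 * π)))
      = (2*π)⁻¹ * ∫ θ in Ico 0 (2*π), g θ := by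
  rw [MeasureTheory.integral_smul_measure, ENNReal.toReal_inv, ENNReal.toReal_ofReal
    (by positivity), smul_eq_mul]

lemma integral_gaussianReal (φ : ℝ → ℝ) :
    ∫ x, φ x ∂(gaussianReal 0 1)
      = ∫ x, gaussianPDFReal 0 1 x * φ x := by
  rw [gaussianReal_of_var_ne_zero 0 one_ne_zero]
  have h : gaussianPDF 0 1 = fun x => ((gaussianPDFReal 0 1 x).toNNReal : ENNReal) := rfl
  rw [h, integral_withDensity_eq_integral_smul
    ((measurable_gaussianPDFReal 0 1).real_toNNReal) φ]
  congr 1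
  funext x
  rw [NNReal.smul_def, smul_eq_mul, Real.coe_toNNReal _ (gaussianPDFReal_nonneg 0 1 x)]

lemma key_eq (φ : ℝ → ℝ) (hφ : Continuous φ) (C : ℝ) (hC : ∀ x, |φ x| ≤ C) (t : ℝ) :
    ∫ p : ℝ × ℝ, φ (p.1 * Real.cos (t - p.2))
        ∂((volume.withDensity fun z => ENNReal.ofReal (rayDens z)).prod
          ((ENNReal.ofReal (2 * π))⁻¹ • volume.restrict (Ico 0 (2 * π))))
      = ∫ x, φ x ∂(gaussianReal 0 1) := by
  set μR := volume.withDensity fun z => ENNReal.ofReal (rayDens z) with hmuR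
  set μΘ := (ENNReal.ofReal (2 * π))⁻¹ • volume.restrict (Ico 0 (2 * π)) with hmuT
  haveI : IsProbabilityMeasure μR := muR_prob
  haveI : IsProbabilityMeasure μΘ := muTheta_prob
  have hgcont : Continuous fun p : ℝ × ℝ => φ (p.1 * Real.cos (t - p.2)) :=
    hφ.comp (continuous_fst.mul (Real.continuous_cos.comp (continuous_const.sub continuous_snd)))
  have hint : Integrable (fun p : ℝ × ℝ => φ (p.1 * Real.cos (t - p.2))) (μR.prod μΘ) := by
    apply Integrable.mono' (integrable_const C) hgcont.aestronglyMeasurable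
    exact Filter.Eventually.of_forall fun p => by
      rw [Real.norm_eq_abs]; exact hC _
  rw [MeasureTheory.integral_prod _ hint]
  have hs : Real.sqrt (2*π) * Real.sqrt (2*π) = 2*π :=
    Real.mul_self_sqrt (by positivity)
  have hscal : (2*π)⁻¹ * Real.sqrt (2*π) = (Real.sqrt (2*π))⁻¹ := by
    set s := Real.sqrt (2*π) with hsdef
    rw [← hs, mul_inv]
    have hspos : 0 < s := Real.sqrt_pos.mpr (by positivity)
    field_simp
  calc ∫ z, (∫ θ, φ (z * Real.cos (t - θ)) ∂μΘ) ∂μR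
      = ∫ z, ((2*π)⁻¹ * ∫ θ in Ioo (-π) π, φ (z * Real.cos θ)) ∂μR := by
        refine integral_congr_ae (Filter.Eventually.of_forall fun z => ?_)
        show (∫ θ, φ (z * Real.cos (t - θ)) ∂μΘ)
          = (2*π)⁻¹ * ∫ θ in Ioo (-π) π, φ (z * Real.cos θ)
        rw [hmuT, integral_muTheta, angular_shift]
    _ = ∫ z, rayDens z * ((2*π)⁻¹ * ∫ θ in Ioo (-π) π, φ (z * Real.cos θ)) := by
        rw [hmuR, integral_muR]
    _ = (2*π)⁻¹ * ∫ z, rayDens z * ∫ θ in Ioo (-π) π, φ (z * Real.cos θ) := by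
        rw [← integral_const_mul]
        congr 1; funext z; ring
    _ = (2*π)⁻¹ * ∫ z in Ioi (0:ℝ),
          (∫ θ in Ioo (-π) π, z * Real.exp (-z^2/2) * φ (z * Real.cos θ)) := by
        congr 1
        rw [rayDens_eq]
        have h1 : (fun z => Set.indicator (Ici (0:ℝ)) (fun z => z * Real.exp (-z^2/2)) z
            * ∫ θ in Ioo (-π) π, φ (z * Real.cos θ))
            = Set.indicator (Ici (0:ℝ)) (fun z => z * Real.exp (-z^2/2)
                * ∫ θ in Ioo (-π) π, φ (z * Real.cos θ)) := by
          funext z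
          by_cases hz : z ∈ Ici (0:ℝ) <;> simp [Set.indicator, hz]
        rw [h1, MeasureTheory.integral_indicator measurableSet_Ici,
          MeasureTheory.setIntegral_congr_set Ioi_ae_eq_Ici.symm]
        refine MeasureTheory.setIntegral_congr_fun measurableSet_Ioi fun z _ => ?_
        exact (integral_const_mul _ _).symm
    _ = (2*π)⁻¹ * ((∫ x, φ x * Real.exp (-x^2/2)) * Real.sqrt (2*π)) := by
        rw [polar_eq φ hφ C hC]
    _ = ∫ x, φ x ∂(gaussianReal 0 1) := by
        rw [integral_gaussianReal φ]
        have hpdf : (fun x : ℝ => gaussianPDFReal 0 1 x * φ x)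
            = fun x : ℝ => (Real.sqrt (2*π))⁻¹ * (φ x * Real.exp (-x^2/2)) := by
          funext x
          simp only [gaussianPDFReal, NNReal.coe_one, mul_one, sub_zero]
          ring
        rw [hpdf, integral_const_mul, ← hscal]
        ring

/-- The pushforward of (Rayleigh amplitude) ⊗ (uniform phase on `[0,2π)`) under
`(z, θ) ↦ z·cos(t−θ)` is the standard Gaussian measure, for every `t`. -/
theorem rayleigh_uniform_pushforward_gaussian
    (μR μΘ : Measure ℝ)
    (hμR : μR = volume.withDensity
      (fun z => ENNReal.ofReal
        (z * Real.exp (-z^2/2) * Set.indicator (Ici (0:ℝ)) (fun _ => (1:ℝ)) z)))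
    (hμΘ : μΘ = (ENNReal.ofReal (2 * π))⁻¹ • volume.restrict (Ico 0 (2 * π)))
    (t : ℝ) :
    Measure.map (fun p : ℝ × ℝ => p.1 * Real.cos (t - p.2)) (μR.prod μΘ)
      = gaussianReal 0 1 := by
  have hR : μR = volume.withDensity (fun z => ENNReal.ofReal (rayDens z)) := hμR
  rw [hR, hμΘ]
  set ν := (volume.withDensity fun z => ENNReal.ofReal (rayDens z)).prod
    ((ENNReal.ofReal (2 * π))⁻¹ • volume.restrict (Ico 0 (2 * π))) with hν
  have hgm : Measurable fun p : ℝ × ℝ => p.1 * Real.cos (t - p.2) :=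
    measurable_fst.mul ((Real.continuous_cos.comp
      (continuous_const.sub continuous_snd)).measurable)
  haveI : IsProbabilityMeasure (volume.withDensity fun z => ENNReal.ofReal (rayDens z)) :=
    muR_prob
  haveI : IsProbabilityMeasure ((ENNReal.ofReal (2 * π))⁻¹ • volume.restrict (Ico 0 (2 * π))) :=
    muTheta_prob
  haveI : IsProbabilityMeasure ν := by rw [hν]; infer_instance
  haveI : IsProbabilityMeasure
      (Measure.map (fun p : ℝ × ℝ => p.1 * Real.cos (t - p.2)) ν) :=
    Measure.isProbabilityMeasure_map hgm.aemeasurable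
  apply MeasureTheory.ext_of_forall_lintegral_eq_of_IsFiniteMeasure
  intro f
  rw [MeasureTheory.lintegral_map f.measurable_coe_ennreal_comp hgm]
  have hCf : ∀ x : ℝ, |((f x : ℝ≥0) : ℝ)| ≤ ((nndist f 0 : ℝ≥0) : ℝ) := fun x => by
    rw [abs_of_nonneg (f x).coe_nonneg]
    exact_mod_cast BoundedContinuousFunction.NNReal.upper_bound f x
  have hfc : Continuous fun x : ℝ => ((f x : ℝ≥0) : ℝ) :=
    NNReal.continuous_coe.comp f.continuous
  have hint1 : Integrable (fun p : ℝ × ℝ =>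
      ((f (p.1 * Real.cos (t - p.2)) : ℝ≥0) : ℝ)) ν := by
    apply Integrable.mono' (integrable_const ((nndist f 0 : ℝ≥0) : ℝ))
    · exact (hfc.comp (continuous_fst.mul (Real.continuous_cos.comp
        (continuous_const.sub continuous_snd)))).aestronglyMeasurable
    · exact Filter.Eventually.of_forall fun p => by
        rw [Real.norm_eq_abs]; exact hCf _
  have hint2 : Integrable (fun x : ℝ => ((f x : ℝ≥0) : ℝ)) (gaussianReal 0 1) :=
    BoundedContinuousFunction.integrable_of_nnreal _ f
  rw [MeasureTheory.lintegral_coe_eq_integral _ hint1,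
    MeasureTheory.lintegral_coe_eq_integral _ hint2]
  congr 1
  exact key_eq _ hfc _ hCf t
end

section
/- Let τ > 0 and a, b ∈ ℝ. Define X : ℝ → ℝ by X(t) = 0 for t < 0 and X(t) = Σ_{k=0}^{⌊t/τ⌋} (bᵏ/k!)·(t − kτ)ᵏ·e^{a(t − kτ)} for t ≥ 0. Then X is continuous on [0, ∞), X(0) = 1, and for every t ∈ (0, ∞) with t ≠ τ, X is differentiable at t with X′(t) = a·X(t) + b·X(t − τ). That is, X is the fundamental solution of the linear differential delay equation x′(t) = a·x(t) + b·x(t − τ). -/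
open Set Real Finset

noncomputable def gddeG (τ a b : ℝ) (k : ℕ) (t : ℝ) : ℝ :=
  b ^ k / (Nat.factorial k) * (t - k * τ) ^ k * Real.exp (a * (t - k * τ))

noncomputable def gddeS (τ a b : ℝ) (n : ℕ) (t : ℝ) : ℝ :=
  ∑ k ∈ Finset.range (n + 1), gddeG τ a b k t

lemma gddeG_deriv_aux (τ a b : ℝ) (k : ℕ) (t : ℝ) :
    HasDerivAt (gddeG τ a b k)
      (b ^ k / (Nat.factorial k) *
        ((k * (t - k * τ) ^ (k - 1) * 1) * Real.exp (a * (t - k * τ))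
          + (t - k * τ) ^ k * (Real.exp (a * (t - k * τ)) * a))) t := by
  have h1 : HasDerivAt (fun s : ℝ => s - k * τ) 1 t := (hasDerivAt_id t).sub_const _
  have h2 : HasDerivAt (fun s : ℝ => (s - k * τ) ^ k)
      ((k : ℝ) * (t - k * τ) ^ (k - 1) * 1) t := h1.pow k
  have h3 : HasDerivAt (fun s : ℝ => a * (s - k * τ)) (a * 1) t := h1.const_mul a
  have h4 : HasDerivAt (fun s : ℝ => Real.exp (a * (s - k * τ)))
      (Real.exp (a * (t - k * τ)) * (a * 1)) t := h3.exp
  have h5 := (h2.mul h4).const_mul (b ^ k / (Nat.factorial k))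
  have he : gddeG τ a b k =
      fun s => b ^ k / (Nat.factorial k) *
        ((s - k * τ) ^ k * Real.exp (a * (s - k * τ))) := by
    ext s; simp [gddeG, mul_assoc]
  rw [he]
  refine h5.congr_deriv ?_
  ring

lemma gddeG_deriv0 (τ a b : ℝ) (t : ℝ) :
    HasDerivAt (gddeG τ a b 0) (a * gddeG τ a b 0 t) t := by
  have := gddeG_deriv_aux τ a b 0 t
  convert this using 1
  simp [gddeG]
  ring

lemma gddeG_derivS (τ a b : ℝ) (k : ℕ) (t : ℝ) :
    HasDerivAt (gddeG τ a b (k + 1))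
      (a * gddeG τ a b (k + 1) t + b * gddeG τ a b k (t - τ)) t := by
  have := gddeG_deriv_aux τ a b (k + 1) t
  convert this using 1
  have harg : t - τ - (k : ℝ) * τ = t - ((k : ℕ) + 1 : ℕ) * τ := by push_cast; ring
  simp only [gddeG, harg]
  have hfac : ((Nat.factorial (k + 1) : ℝ)) = (k + 1) * Nat.factorial k := by
    push_cast [Nat.factorial_succ]; ring
  have hk : (Nat.factorial k : ℝ) ≠ 0 := by positivity
  have hk1 : ((k:ℝ) + 1) ≠ 0 := by positivity
  rw [hfac]
  push_cast
  field_simp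
  ring

lemma gddeS_deriv (τ a b : ℝ) (n : ℕ) (t : ℝ) :
    HasDerivAt (gddeS τ a b n)
      (a * gddeS τ a b n t + b * ∑ k ∈ Finset.range n, gddeG τ a b k (t - τ)) t := by
  induction n with
  | zero =>
      have := gddeG_deriv0 τ a b t
      have he : gddeS τ a b 0 = gddeG τ a b 0 := by
        ext s; simp [gddeS]
      rw [he]
      simpa using this
  | succ n ih =>
      have he : gddeS τ a b (n + 1) = fun s => gddeS τ a b n s + gddeG τ a b (n + 1) s := by
        ext s; simp [gddeS, Finset.sum_range_succ]
      rw [he]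
      have := ih.add (gddeG_derivS τ a b n t)
      refine this.congr_deriv ?_
      simp [gddeS, Finset.sum_range_succ]
      ring

lemma gdde_floor (τ : ℝ) (hτ : 0 < τ) (n : ℕ) (s : ℝ)
    (h1 : (n : ℝ) * τ ≤ s) (h2 : s < ((n : ℝ) + 1) * τ) : ⌊s / τ⌋ = n := by
  rw [Int.floor_eq_iff]
  push_cast
  rw [le_div_iff₀ hτ, div_lt_iff₀ hτ]
  exact ⟨h1, h2⟩

lemma gddeG_zero (τ a b : ℝ) (k : ℕ) (t : ℝ) (h : t - k * τ = 0) (hk : k ≠ 0) :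
    gddeG τ a b k t = 0 := by
  rw [gddeG, h]
  simp [zero_pow hk]

/-- The explicit series `X(t) = Σ_{k=0}^{⌊t/τ⌋} (bᵏ/k!)(t−kτ)ᵏ e^{a(t−kτ)}` (and `X = 0`
for `t < 0`) is the fundamental solution of `x′(t) = a·x(t) + b·x(t−τ)`: it is continuous
on `[0,∞)`, `X(0) = 1`, and satisfies the delay equation at every `t > 0`, `t ≠ τ`. -/
theorem fundamental_solution_linear_dde
    (τ a b : ℝ) (hτ : 0 < τ)
    (X : ℝ → ℝ)
    (hX : ∀ t, X t = if t < 0 then 0 else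
      ∑ k ∈ Finset.range ((⌊t / τ⌋).toNat + 1),
        b ^ k / (Nat.factorial k) * (t - k * τ) ^ k * Real.exp (a * (t - k * τ))) :
    ContinuousOn X (Ici 0) ∧ X 0 = 1 ∧
      ∀ t, 0 < t → t ≠ τ → HasDerivAt X (a * X t + b * X (t - τ)) t := by
  have Xneg : ∀ s : ℝ, s < 0 → X s = 0 := fun s hs => by rw [hX, if_pos hs]
  have XeqS : ∀ (n : ℕ) (s : ℝ), (n : ℝ) * τ ≤ s → s < ((n : ℝ) + 1) * τ →
      X s = gddeS τ a b n s := by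
    intro n s h1 h2
    have hs0 : (0:ℝ) ≤ s := le_trans (by positivity) h1
    have hf : ⌊s / τ⌋ = n := gdde_floor τ hτ n s h1 h2
    rw [hX, if_neg (not_lt.2 hs0), hf]
    simp [gddeS, gddeG, Int.toNat_natCast]
  -- the inhomogeneous term
  have hb : ∀ (n : ℕ) (t : ℝ), (n : ℝ) * τ ≤ t → t < ((n : ℝ) + 1) * τ →
      (∑ k ∈ Finset.range n, gddeG τ a b k (t - τ)) = X (t - τ) := by
    intro n t h1 h2
    cases n with
    | zero =>
        have : t - τ < 0 := by push_cast at h2; linarith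
        simp [Xneg _ this]
    | succ m =>
        push_cast at h1 h2
        have e1 : (m : ℝ) * τ ≤ t - τ := by nlinarith
        have e2 : t - τ < ((m : ℝ) + 1) * τ := by nlinarith
        rw [XeqS m _ e1 e2]
        simp [gddeS]
  -- existence of the index n
  have hex : ∀ t : ℝ, 0 < t → ∃ n : ℕ, (n : ℝ) * τ ≤ t ∧ t < ((n : ℝ) + 1) * τ := by
    intro t ht
    refine ⟨(⌊t / τ⌋).toNat, ?_, ?_⟩
    · have h0 : (0:ℤ) ≤ ⌊t / τ⌋ := Int.floor_nonneg.2 (by positivity)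
      have h' : ((⌊t / τ⌋).toNat : ℤ) = ⌊t / τ⌋ := Int.toNat_of_nonneg h0
      have hc : (((⌊t / τ⌋).toNat : ℕ) : ℝ) = ((⌊t / τ⌋ : ℤ) : ℝ) := by exact_mod_cast h'
      have := Int.floor_le (t / τ)
      rw [← le_div_iff₀ hτ]
      rw [hc]
      linarith
    · have h0 : (0:ℤ) ≤ ⌊t / τ⌋ := Int.floor_nonneg.2 (by positivity)
      have h' : ((⌊t / τ⌋).toNat : ℤ) = ⌊t / τ⌋ := Int.toNat_of_nonneg h0
      have hc : (((⌊t / τ⌋).toNat : ℕ) : ℝ) = ((⌊t / τ⌋ : ℤ) : ℝ) := by exact_mod_cast h'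
      have := Int.lt_floor_add_one (t / τ)
      rw [← div_lt_iff₀ hτ]
      rw [hc]
      linarith
  -- the delay differential equation
  have key : ∀ t, 0 < t → t ≠ τ → HasDerivAt X (a * X t + b * X (t - τ)) t := by
    intro t ht htτ
    obtain ⟨n, h1, h2⟩ := hex t ht
    rcases eq_or_lt_of_le h1 with heq | hlt
    · -- t = n * τ, so n ≥ 2
      have hn2 : 2 ≤ n := by
        by_contra h
        interval_cases n
        · simp at heq; exact absurd heq.symm (ne_of_gt ht)
        · push_cast at heq; exact htτ (by linarith)
      obtain ⟨m, rfl⟩ : ∃ m, n = m + 2 := ⟨n - 2, by omega⟩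
      have hteq : t = ((m : ℝ) + 2) * τ := by push_cast at heq; linarith
      -- right derivative
      have hevr : X =ᶠ[nhdsWithin t (Ici t)] gddeS τ a b (m + 2) := by
        filter_upwards [Ico_mem_nhdsGE_of_mem (left_mem_Ico.2 h2)] with s hs
        exact XeqS _ s (h1.trans hs.1) hs.2
      have hdr : HasDerivWithinAt X
          (a * gddeS τ a b (m + 2) t +
            b * ∑ k ∈ Finset.range (m + 2), gddeG τ a b k (t - τ)) (Ici t) t :=
        ((gddeS_deriv τ a b (m + 2) t).hasDerivWithinAt).congr_of_eventuallyEq hevr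
          (XeqS _ t h1 h2)
      -- left derivative
      have hg0 : gddeG τ a b (m + 2) t = 0 :=
        gddeG_zero τ a b (m + 2) t (by push_cast; linarith) (by omega)
      have hg1 : gddeG τ a b (m + 1) (t - τ) = 0 :=
        gddeG_zero τ a b (m + 1) (t - τ) (by push_cast; linarith) (by omega)
      have hSsucc : gddeS τ a b (m + 2) t = gddeS τ a b (m + 1) t + gddeG τ a b (m + 2) t := by
        simp [gddeS, Finset.sum_range_succ]
      have hptl : X t = gddeS τ a b (m + 1) t := by
        rw [XeqS _ t h1 h2, hSsucc, hg0, add_zero]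
      have hm1t : ((m : ℝ) + 1) * τ < t := by nlinarith
      have hevl : X =ᶠ[nhdsWithin t (Iic t)] gddeS τ a b (m + 1) := by
        filter_upwards [Icc_mem_nhdsLE_of_mem (⟨hm1t, le_refl t⟩ : t ∈ Ioc (((m:ℝ)+1)*τ) t)]
          with s hs
        rcases eq_or_lt_of_le hs.2 with rfl | hst
        · exact hptl
        · exact XeqS (m + 1) s (by push_cast; exact hs.1) (by push_cast; linarith)
      have hdl : HasDerivWithinAt X
          (a * gddeS τ a b (m + 1) t +
            b * ∑ k ∈ Finset.range (m + 1), gddeG τ a b k (t - τ)) (Iic t) t :=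
        ((gddeS_deriv τ a b (m + 1) t).hasDerivWithinAt).congr_of_eventuallyEq hevl hptl
      have hDeq : a * gddeS τ a b (m + 1) t +
            b * ∑ k ∈ Finset.range (m + 1), gddeG τ a b k (t - τ)
          = a * gddeS τ a b (m + 2) t +
            b * ∑ k ∈ Finset.range (m + 2), gddeG τ a b k (t - τ) := by
        have h2' : ∑ k ∈ Finset.range (m + 2), gddeG τ a b k (t - τ)
            = ∑ k ∈ Finset.range (m + 1), gddeG τ a b k (t - τ)
              + gddeG τ a b (m + 1) (t - τ) := Finset.sum_range_succ _ _
        rw [h2', hg1, hSsucc, hg0]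
        ring
      rw [hDeq] at hdl
      have := hdl.union hdr
      rw [Iic_union_Ici, hasDerivWithinAt_univ] at this
      rw [XeqS _ t h1 h2, ← hb (m + 2) t h1 h2]
      exact this
    · -- n * τ < t < (n+1) * τ
      have hev : X =ᶠ[nhds t] gddeS τ a b n := by
        filter_upwards [Ioo_mem_nhds hlt h2] with s hs
        exact XeqS n s hs.1.le hs.2
      have hd := (gddeS_deriv τ a b n t).congr_of_eventuallyEq hev
      rw [XeqS n t h1 h2, ← hb n t h1 h2]
      exact hd
  refine ⟨?_, ?_, key⟩
  · -- continuity
    intro t ht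
    rcases eq_or_lt_of_le (mem_Ici.1 ht) with rfl₀ | htpos
    · -- t = 0
      subst rfl₀
      have hev : X =ᶠ[nhdsWithin 0 (Ici 0)] gddeS τ a b 0 := by
        filter_upwards [Ico_mem_nhdsGE_of_mem
          (left_mem_Ico.2 (show (0:ℝ) < (((0:ℕ):ℝ)+1)*τ by norm_num; linarith))] with s hs
        exact XeqS 0 s (by simpa using hs.1) hs.2
      exact ((gddeS_deriv τ a b 0 0).differentiableAt.continuousAt.continuousWithinAt
        ).congr_of_eventuallyEq hev (XeqS 0 0 (by simp) (by simpa using hτ))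
    · obtain ⟨n, h1, h2⟩ := hex t htpos
      rcases eq_or_lt_of_le h1 with heq | hlt
      · -- t = n * τ, n ≥ 1
        have hn1 : 1 ≤ n := by
          by_contra h
          interval_cases n
          simp at heq; exact absurd heq.symm (ne_of_gt htpos)
        obtain ⟨m, rfl⟩ : ∃ m, n = m + 1 := ⟨n - 1, by omega⟩
        have hteq : t = ((m : ℝ) + 1) * τ := by push_cast at heq; linarith
        have hevr : X =ᶠ[nhdsWithin t (Ici t)] gddeS τ a b (m + 1) := by
          filter_upwards [Ico_mem_nhdsGE_of_mem (left_mem_Ico.2 h2)] with s hs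
          exact XeqS _ s (h1.trans hs.1) hs.2
        have cwr : ContinuousWithinAt X (Ici t) t :=
          ((gddeS_deriv τ a b (m + 1) t).differentiableAt.continuousAt.continuousWithinAt
            ).congr_of_eventuallyEq hevr (XeqS _ t h1 h2)
        have hg0 : gddeG τ a b (m + 1) t = 0 :=
          gddeG_zero τ a b (m + 1) t (by push_cast; linarith) (by omega)
        have hSsucc : gddeS τ a b (m + 1) t = gddeS τ a b m t + gddeG τ a b (m + 1) t := by
          simp [gddeS, Finset.sum_range_succ]
        have hptl : X t = gddeS τ a b m t := by
          rw [XeqS _ t h1 h2, hSsucc, hg0, add_zero]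
        have hmt : (m : ℝ) * τ < t := by nlinarith
        have hevl : X =ᶠ[nhdsWithin t (Iic t)] gddeS τ a b m := by
          filter_upwards [Icc_mem_nhdsLE_of_mem (⟨hmt, le_refl t⟩ : t ∈ Ioc ((m:ℝ)*τ) t)]
            with s hs
          rcases eq_or_lt_of_le hs.2 with rfl | hst
          · exact hptl
          · exact XeqS m s hs.1 (by push_cast; linarith)
        have cwl : ContinuousWithinAt X (Iic t) t :=
          ((gddeS_deriv τ a b m t).differentiableAt.continuousAt.continuousWithinAt
            ).congr_of_eventuallyEq hevl hptl
        have := cwl.union cwr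
        rw [Iic_union_Ici, continuousWithinAt_univ] at this
        exact this.continuousWithinAt
      · -- away from the grid: even differentiable
        have htne : t ≠ τ := by
          intro h
          subst h
          have hn0 : n = 0 := by
            by_contra hn
            have : (1 : ℝ) ≤ (n : ℝ) := by exact_mod_cast Nat.one_le_iff_ne_zero.2 hn
            nlinarith
          rw [hn0] at h2
          push_cast at h2
          linarith
        exact (key t htpos htne).continuousAt.continuousWithinAt
  · -- X 0 = 1
    rw [XeqS 0 0 (by simp) (by simpa using hτ)]
    simp [gddeS, gddeG]
end

section
/- Let τ > 0, b ∈ ℝ, a ≠ 0 and t ∈ [0, τ]. Then ∫_{−τ}^0 ( e^{a t} + (b/a)·( e^{a·max(t − r − τ, 0)} − 1 ) )² dr = e^{2at}·τ + (2b/a²)·e^{at}·( e^{at} − 1 − a t ) + (b²/(2a³))·( (e^{at} − 1)² − 2( e^{at} − 1 − a t ) ). (This computes the variance σ²(t) = ∫_{−τ}^0 (S_t η_r(0))² dr of the solution of x′(t) = a·x(t) + b·x(t−τ) with standard Wiener initial data on [−τ,0].) -/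
open MeasureTheory Set Real

lemma int_exp_mul (c A B : ℝ) (hc : c ≠ 0) :
    ∫ x in A..B, Real.exp (c * x) = (Real.exp (c * B) - Real.exp (c * A)) / c := by
  have h : ∀ x, HasDerivAt (fun y => Real.exp (c * y) / c) (Real.exp (c * x)) x := by
    intro x
    have h1 : HasDerivAt (fun y => c * y) c x := by
      simpa using (hasDerivAt_id x).const_mul c
    have h2 := (h1.exp).div_const c
    simpa [mul_comm, mul_div_assoc, mul_div_cancel_left₀ _ hc] using h2
  rw [intervalIntegral.integral_eq_sub_of_hasDerivAt (fun x _ => h x)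
    ((Real.continuous_exp.comp (continuous_const.mul continuous_id)).intervalIntegrable A B)]
  ring

/-- Variance of the solution of `x′(t) = a·x(t) + b·x(t−τ)` (case `a ≠ 0`) with standard
Wiener initial data, for `t ∈ [0,τ]`. -/
theorem variance_dde_wiener_initial_a_ne_zero
    (τ a b : ℝ) (hτ : 0 < τ) (ha : a ≠ 0) (t : ℝ) (ht : t ∈ Icc 0 τ) :
    ∫ r in (-τ)..0,
        (Real.exp (a * t) + (b / a) * (Real.exp (a * max (t - r - τ) 0) - 1))^2
      = Real.exp (2 * a * t) * τ
        + (2 * b / a^2) * Real.exp (a * t) * (Real.exp (a * t) - 1 - a * t)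
        + (b^2 / (2 * a^3)) *
            ((Real.exp (a * t) - 1)^2 - 2 * (Real.exp (a * t) - 1 - a * t)) := by
  obtain ⟨ht0, htτ⟩ := ht
  have h1 : -τ ≤ t - τ := by linarith
  have h2 : t - τ ≤ 0 := by linarith
  have hcont : Continuous (fun r =>
      (Real.exp (a * t) + (b / a) * (Real.exp (a * max (t - r - τ) 0) - 1))^2) := by
    fun_prop
  rw [← intervalIntegral.integral_add_adjacent_intervals (a := -τ) (b := t - τ) (c := 0)
    (hcont.intervalIntegrable _ _) (hcont.intervalIntegrable _ _)]
  have e2 : ∫ r in (t - τ)..0,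
      (Real.exp (a * t) + (b / a) * (Real.exp (a * max (t - r - τ) 0) - 1))^2
      = Real.exp (a * t)^2 * (0 - (t - τ)) := by
    rw [intervalIntegral.integral_congr (g := fun _ => Real.exp (a * t)^2)]
    · simp [mul_comm]
    · intro r hr
      rw [uIcc_of_le h2] at hr
      have : max (t - r - τ) 0 = 0 := max_eq_right (by linarith [hr.1])
      simp [this]
  have e1 : ∫ r in (-τ)..(t - τ),
      (Real.exp (a * t) + (b / a) * (Real.exp (a * max (t - r - τ) 0) - 1))^2
      = ∫ r in (-τ)..(t - τ),
        ((Real.exp (a * t) - b / a)^2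
          + (2 * (Real.exp (a * t) - b / a) * ((b / a) * Real.exp (a * (t - τ))))
              * Real.exp ((-a) * r)
          + ((b / a) * Real.exp (a * (t - τ)))^2 * Real.exp ((-(2 * a)) * r)) := by
    apply intervalIntegral.integral_congr
    intro r hr
    rw [uIcc_of_le h1] at hr
    have hm : max (t - r - τ) 0 = t - r - τ := max_eq_left (by linarith [hr.2])
    dsimp only
    rw [hm]
    have ea : Real.exp (a * (t - r - τ)) = Real.exp (a * (t - τ)) * Real.exp ((-a) * r) := by
      rw [← Real.exp_add]; ring_nf
    have eb : Real.exp ((-(2 * a)) * r) = Real.exp ((-a) * r) * Real.exp ((-a) * r) := by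
      rw [← Real.exp_add]; ring_nf
    rw [show a * (t - r - τ) = a * (t - r - τ) from rfl, ea, eb]
    ring
  rw [e1, e2]
  have i1 : Continuous (fun r : ℝ => Real.exp ((-a) * r)) := by fun_prop
  have i2 : Continuous (fun r : ℝ => Real.exp ((-(2 * a)) * r)) := by fun_prop
  rw [intervalIntegral.integral_add (intervalIntegrable_const.add
        ((i1.intervalIntegrable _ _).const_mul _))
      ((i2.intervalIntegrable _ _).const_mul _),
    intervalIntegral.integral_add intervalIntegrable_const
      ((i1.intervalIntegrable _ _).const_mul _),
    intervalIntegral.integral_const,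
    intervalIntegral.integral_const_mul, intervalIntegral.integral_const_mul,
    int_exp_mul _ _ _ (neg_ne_zero.mpr ha),
    int_exp_mul _ _ _ (by simpa using (mul_ne_zero two_ne_zero ha))]
  have E1 : Real.exp (a * (t - τ)) = Real.exp (a * t) / Real.exp (a * τ) := by
    rw [← Real.exp_sub]; ring_nf
  have E2 : Real.exp ((-a) * (t - τ)) = Real.exp (a * τ) / Real.exp (a * t) := by
    rw [← Real.exp_sub]; ring_nf
  have E3 : Real.exp ((-a) * (-τ)) = Real.exp (a * τ) := by ring_nf
  have E4 : Real.exp ((-(2 * a)) * (t - τ))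
      = (Real.exp (a * τ) / Real.exp (a * t))^2 := by
    rw [div_pow, ← Real.exp_nat_mul, ← Real.exp_nat_mul, ← Real.exp_sub]; ring_nf
  have E5 : Real.exp ((-(2 * a)) * (-τ)) = Real.exp (a * τ)^2 := by
    rw [← Real.exp_nat_mul]; ring_nf
  have E6 : Real.exp (2 * a * t) = Real.exp (a * t)^2 := by
    rw [← Real.exp_nat_mul]; ring_nf
  rw [E1, E2, E3, E4, E5, E6]
  have hτ' : Real.exp (a * τ) ≠ 0 := Real.exp_ne_zero _
  have ht' : Real.exp (a * t) ≠ 0 := Real.exp_ne_zero _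
  field_simp
  ring_nf
  field_simp
  ring
end

section
/- Let τ > 0, b ∈ ℝ, a ≠ 0, −τ ≤ s₁ ≤ s₂ ≤ 0 and −s₂ < t ≤ −s₁. Then ∫_{−τ}^0 1_{(−∞, t+s₁]}(r) · ( e^{a(t+s₂)} + (b/a)·( e^{a·max(t + s₂ − r − τ, 0)} − 1 ) ) dr = e^{a(t+s₂)}·(t + s₁ + τ) + (b/a²)·( e^{a(t+s₂)} − 1 − a·(t + s₂) ). (This is the covariance R_t(s₁, s₂) for the solution of x′(t) = a·x(t) + b·x(t−τ) with standard Wiener initial data, in the range −s₂ < t ≤ −s₁.) -/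
open MeasureTheory Set Real

/-- Covariance `R_t(s₁,s₂)` for `x′(t) = a·x(t) + b·x(t−τ)` (case `a ≠ 0`) with standard
Wiener initial data, in the range `−s₂ < t ≤ −s₁`. -/
theorem covariance_dde_wiener_middle_range_a_ne_zero
    (τ a b : ℝ) (hτ : 0 < τ) (ha : a ≠ 0) (s₁ s₂ : ℝ)
    (hs₁ : -τ ≤ s₁) (hs₁₂ : s₁ ≤ s₂) (hs₂ : s₂ ≤ 0)
    (t : ℝ) (ht₁ : -s₂ < t) (ht₂ : t ≤ -s₁) :
    ∫ r in (-τ)..0,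
        Set.indicator (Iic (t + s₁)) (fun _ => (1:ℝ)) r
          * (Real.exp (a * (t + s₂))
              + (b / a) * (Real.exp (a * max (t + s₂ - r - τ) 0) - 1))
      = Real.exp (a * (t + s₂)) * (t + s₁ + τ)
        + (b / a^2) * (Real.exp (a * (t + s₂)) - 1 - a * (t + s₂)) := by
  set g : ℝ → ℝ := fun r =>
    Real.exp (a * (t + s₂)) + (b / a) * (Real.exp (a * max (t + s₂ - r - τ) 0) - 1) with hg
  have hd : 0 < t + s₂ := by linarith
  have hc0 : t + s₁ ≤ 0 := by linarith
  have hτm : -τ ≤ t + s₂ - τ := by linarith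
  have hmc : t + s₂ - τ ≤ t + s₁ := by linarith
  -- indicator * g = indicator g
  have hind : ∀ r : ℝ,
      Set.indicator (Iic (t + s₁)) (fun _ => (1:ℝ)) r * g r
        = Set.indicator {x | x ≤ t + s₁} g r := by
    intro r
    by_cases hr : r ≤ t + s₁ <;> simp [Set.indicator_apply, hr]
  rw [intervalIntegral.integral_congr (fun r _ => hind r)]
  rw [intervalIntegral.integral_indicator ⟨by linarith, hc0⟩]
  -- split at m := t + s₂ - τ
  have hgcont : Continuous g := by
    apply Continuous.add continuous_const
    apply Continuous.mul continuous_const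
    apply Continuous.sub _ continuous_const
    exact Real.continuous_exp.comp (continuous_const.mul
      ((((continuous_const.sub continuous_id).sub continuous_const).max continuous_const)))
  have hsplit := intervalIntegral.integral_add_adjacent_intervals
    (μ := volume) (a := -τ) (b := t + s₂ - τ) (c := t + s₁) (f := g)
    (hgcont.intervalIntegrable _ _) (hgcont.intervalIntegrable _ _)
  rw [← hsplit]
  -- second piece: constant
  have h2 : ∫ r in (t + s₂ - τ)..(t + s₁), g r
      = Real.exp (a * (t + s₂)) * (t + s₁ - (t + s₂ - τ)) := by
    have : ∀ r ∈ Set.uIcc (t + s₂ - τ) (t + s₁), g r = Real.exp (a * (t + s₂)) := by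
      intro r hr
      rw [Set.uIcc_of_le hmc] at hr
      have : max (t + s₂ - r - τ) 0 = 0 := max_eq_right (by linarith [hr.1])
      simp [hg, this]
    rw [intervalIntegral.integral_congr this, intervalIntegral.integral_const, smul_eq_mul]
    ring
  -- first piece: antiderivative
  have h1 : ∫ r in (-τ)..(t + s₂ - τ), g r
      = Real.exp (a * (t + s₂)) * (t + s₂)
        + (b / a^2) * (Real.exp (a * (t + s₂)) - 1 - a * (t + s₂)) := by
    have hcongr : ∀ r ∈ Set.uIcc (-τ) (t + s₂ - τ), g r
        = Real.exp (a * (t + s₂))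
          + (b / a) * (Real.exp (a * (t + s₂ - r - τ)) - 1) := by
      intro r hr
      rw [Set.uIcc_of_le hτm] at hr
      have : max (t + s₂ - r - τ) 0 = t + s₂ - r - τ := max_eq_left (by linarith [hr.2])
      simp [hg, this]
    rw [intervalIntegral.integral_congr hcongr]
    have hderiv : ∀ r ∈ Set.uIcc (-τ) (t + s₂ - τ),
        HasDerivAt (fun r : ℝ => Real.exp (a * (t + s₂)) * r
            + (b / a) * (-(Real.exp (a * (t + s₂ - r - τ))) / a - r))
          (Real.exp (a * (t + s₂)) + (b / a) * (Real.exp (a * (t + s₂ - r - τ)) - 1)) r := by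
      intro r _
      have h1 : HasDerivAt (fun r : ℝ => a * (t + s₂ - r - τ)) (-a) r := by
        have : HasDerivAt (fun r : ℝ => t + s₂ - r - τ) (-1) r := by
          simpa using ((hasDerivAt_id r).const_sub (t + s₂)).sub_const τ
        simpa using this.const_mul a
      have h2 : HasDerivAt (fun r : ℝ => Real.exp (a * (t + s₂ - r - τ)))
          (Real.exp (a * (t + s₂ - r - τ)) * (-a)) r := h1.exp
      have h3 : HasDerivAt (fun r : ℝ => -(Real.exp (a * (t + s₂ - r - τ))) / a - r)
          (-(Real.exp (a * (t + s₂ - r - τ)) * (-a)) / a - 1) r := by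
        exact ((h2.neg.div_const a).sub (hasDerivAt_id r))
      have h4 := ((hasDerivAt_id r).const_mul (Real.exp (a * (t + s₂)))).add
        (h3.const_mul (b / a))
      refine h4.congr_deriv ?_
      simp only [mul_one, mul_neg, neg_neg, mul_div_assoc, div_self ha]
    have hcont : IntervalIntegrable
        (fun r : ℝ => Real.exp (a * (t + s₂)) + (b / a) * (Real.exp (a * (t + s₂ - r - τ)) - 1))
        volume (-τ) (t + s₂ - τ) := by
      apply Continuous.intervalIntegrable
      exact continuous_const.add (continuous_const.mul
        ((Real.continuous_exp.comp (continuous_const.mul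
          ((continuous_const.sub continuous_id).sub continuous_const))).sub continuous_const))
    rw [intervalIntegral.integral_eq_sub_of_hasDerivAt hderiv hcont]
    have e1 : a * (t + s₂ - (t + s₂ - τ) - τ) = 0 := by ring
    have e2 : a * (t + s₂ - -τ - τ) = a * (t + s₂) := by ring
    rw [e1, e2, Real.exp_zero]
    field_simp
    ring
  rw [h1, h2]
  ring
end

section
/- Let τ > 0, b ∈ ℝ, −τ ≤ s₁ ≤ s₂ ≤ 0 and −s₁ < t ≤ τ − s₂. Then ∫_{−τ}^0 ( 1 + b·max(t + s₁ − r − τ, 0) )·( 1 + b·max(t + s₂ − r − τ, 0) ) dr = τ + (b/2)·(t + s₂)² + (b/2)·(t + s₁)² + (b²/3)·(t + s₁)³ + (b²/2)·(t + s₁)²·(s₂ − s₁). (This is the covariance R_t(s₁, s₂) for the solution of x′(t) = b·x(t−τ) (case a = 0) with standard Wiener initial data, in the range t > −s₁.) -/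
open MeasureTheory Set Real

lemma poly_integral (b c₁ c₂ lo hi : ℝ) :
    ∫ r in lo..hi, (1 + b * (c₁ - r)) * (1 + b * (c₂ - r))
      = ((fun r : ℝ => r - (b/2)*(c₁-r)^2 - (b/2)*(c₂-r)^2
          + b^2*(r^3/3 - (c₁+c₂)*r^2/2 + c₁*c₂*r)) hi)
        - ((fun r : ℝ => r - (b/2)*(c₁-r)^2 - (b/2)*(c₂-r)^2
          + b^2*(r^3/3 - (c₁+c₂)*r^2/2 + c₁*c₂*r)) lo) := by
  apply intervalIntegral.integral_eq_sub_of_hasDerivAt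
  · intro r _
    have h1 : HasDerivAt (fun r : ℝ => (c₁ - r)^2) (2 * (c₁ - r)^1 * (-1)) r :=
      ((hasDerivAt_id r).const_sub c₁).pow 2
    have h2 : HasDerivAt (fun r : ℝ => (c₂ - r)^2) (2 * (c₂ - r)^1 * (-1)) r :=
      ((hasDerivAt_id r).const_sub c₂).pow 2
    have h3 : HasDerivAt (fun r : ℝ => r^3/3 - (c₁+c₂)*r^2/2 + c₁*c₂*r)
        (((3:ℕ) * r^2)/3 - ((c₁+c₂) * ((2:ℕ) * r^1))/2 + c₁*c₂*1) r :=
      (((hasDerivAt_pow 3 r).div_const 3).sub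
        (((hasDerivAt_pow 2 r).const_mul (c₁+c₂)).div_const 2)).add
        ((hasDerivAt_id r).const_mul (c₁*c₂))
    have h := (((hasDerivAt_id r).sub (h1.const_mul (b/2))).sub
      (h2.const_mul (b/2))).add (h3.const_mul (b^2))
    convert h using 1
    · rfl
    push_cast
    ring
  · apply Continuous.intervalIntegrable
    continuity

lemma poly_integral2 (b c₂ lo hi : ℝ) :
    ∫ r in lo..hi, (1 + b * (c₂ - r))
      = ((fun r : ℝ => r - (b/2)*(c₂-r)^2) hi) - ((fun r : ℝ => r - (b/2)*(c₂-r)^2) lo) := by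
  apply intervalIntegral.integral_eq_sub_of_hasDerivAt
  · intro r _
    have h2 : HasDerivAt (fun r : ℝ => (c₂ - r)^2) (2 * (c₂ - r)^1 * (-1)) r :=
      ((hasDerivAt_id r).const_sub c₂).pow 2
    have h := (hasDerivAt_id r).sub (h2.const_mul (b/2))
    convert h using 1
    · rfl
    ring
  · apply Continuous.intervalIntegrable
    continuity

/-- Covariance `R_t(s₁,s₂)` for `x′(t) = b·x(t−τ)` (case `a = 0`) with standard Wiener
initial data, in the range `−s₁ < t ≤ τ − s₂`. -/
theorem covariance_dde_wiener_late_range_a_zero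
    (τ b : ℝ) (hτ : 0 < τ) (s₁ s₂ : ℝ)
    (hs₁ : -τ ≤ s₁) (hs₁₂ : s₁ ≤ s₂) (hs₂ : s₂ ≤ 0)
    (t : ℝ) (ht₁ : -s₁ < t) (ht₂ : t ≤ τ - s₂) :
    ∫ r in (-τ)..0,
        (1 + b * max (t + s₁ - r - τ) 0) * (1 + b * max (t + s₂ - r - τ) 0)
      = τ + (b / 2) * (t + s₂)^2 + (b / 2) * (t + s₁)^2
        + (b^2 / 3) * (t + s₁)^3 + (b^2 / 2) * (t + s₁)^2 * (s₂ - s₁) := by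
  set c₁ : ℝ := t + s₁ - τ with hc₁def
  set c₂ : ℝ := t + s₂ - τ with hc₂def
  have hA : -τ ≤ c₁ := by rw [hc₁def]; linarith
  have hB : c₁ ≤ c₂ := by rw [hc₁def, hc₂def]; linarith
  have hC : c₂ ≤ 0 := by rw [hc₂def]; linarith
  have hfc : Continuous fun r : ℝ =>
      (1 + b * max (t + s₁ - r - τ) 0) * (1 + b * max (t + s₂ - r - τ) 0) := by
    continuity
  have hi1 := hfc.intervalIntegrable (μ := volume) (-τ) c₁
  have hi2 := hfc.intervalIntegrable (μ := volume) c₁ c₂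
  have hi3 := hfc.intervalIntegrable (μ := volume) c₂ 0
  have hi23 := hfc.intervalIntegrable (μ := volume) c₁ 0
  rw [← intervalIntegral.integral_add_adjacent_intervals hi1 hi23,
      ← intervalIntegral.integral_add_adjacent_intervals hi2 hi3]
  have I1 : (∫ r in (-τ)..c₁,
      (1 + b * max (t + s₁ - r - τ) 0) * (1 + b * max (t + s₂ - r - τ) 0))
      = ∫ r in (-τ)..c₁, (1 + b * (c₁ - r)) * (1 + b * (c₂ - r)) := by
    apply intervalIntegral.integral_congr
    intro r hr
    rw [uIcc_of_le hA] at hr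
    obtain ⟨hr1, hr2⟩ := hr
    have e1 : t + s₁ - r - τ = c₁ - r := by rw [hc₁def]; ring
    have e2 : t + s₂ - r - τ = c₂ - r := by rw [hc₂def]; ring
    dsimp only
    rw [e1, e2, max_eq_left (by linarith), max_eq_left (by linarith)]
  have I2 : (∫ r in c₁..c₂,
      (1 + b * max (t + s₁ - r - τ) 0) * (1 + b * max (t + s₂ - r - τ) 0))
      = ∫ r in c₁..c₂, (1 + b * (c₂ - r)) := by
    apply intervalIntegral.integral_congr
    intro r hr
    rw [uIcc_of_le hB] at hr
    obtain ⟨hr1, hr2⟩ := hr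
    have e1 : t + s₁ - r - τ = c₁ - r := by rw [hc₁def]; ring
    have e2 : t + s₂ - r - τ = c₂ - r := by rw [hc₂def]; ring
    dsimp only
    rw [e1, e2, max_eq_right (by linarith), max_eq_left (by linarith)]
    ring
  have I3 : (∫ r in c₂..0,
      (1 + b * max (t + s₁ - r - τ) 0) * (1 + b * max (t + s₂ - r - τ) 0))
      = ∫ r in c₂..(0:ℝ), (1:ℝ) := by
    apply intervalIntegral.integral_congr
    intro r hr
    rw [uIcc_of_le hC] at hr
    obtain ⟨hr1, hr2⟩ := hr
    have e1 : t + s₁ - r - τ = c₁ - r := by rw [hc₁def]; ring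
    have e2 : t + s₂ - r - τ = c₂ - r := by rw [hc₂def]; ring
    dsimp only
    rw [e1, e2, max_eq_right (by linarith), max_eq_right (by linarith)]
    ring
  rw [I1, I2, I3, poly_integral, poly_integral2, intervalIntegral.integral_const]
  simp only [smul_eq_mul, mul_one]
  rw [hc₁def, hc₂def]
  ring
end

section
/- Let τ > 0, b ∈ ℝ, a ≠ 0, −τ ≤ s₁ ≤ s₂ ≤ 0 and −s₁ < t ≤ τ − s₂. Then ∫_{−τ}^0 ( e^{a(t+s₁)} + (b/a)( e^{a·max(t+s₁−r−τ,0)} − 1 ) )·( e^{a(t+s₂)} + (b/a)( e^{a·max(t+s₂−r−τ,0)} − 1 ) ) dr = e^{a(2t+s₁+s₂)}·τ + (b/a²)·e^{a(t+s₁)}·( e^{a(t+s₂)} − 1 − a(t+s₂) ) + (b/a²)·( e^{a(t+s₂)} − b/a )·( e^{a(t+s₁)} − 1 − a(t+s₁) ) + (b²/(2a³))·e^{a(s₂−s₁)}·( e^{a(t+s₁)} − 1 )². (This is the covariance R_t(s₁, s₂) for the solution of x′(t) = a·x(t) + b·x(t−τ) with standard Wiener initial data, in the range t > −s₁.) -/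
open MeasureTheory Set Real

private lemma lin_deriv (c x : ℝ) : HasDerivAt (fun y : ℝ => c * y) c x := by
  simpa using (hasDerivAt_id x).const_mul c

private lemma exp_lin_deriv (c d x : ℝ) :
    HasDerivAt (fun y : ℝ => Real.exp (c * y + d)) (c * Real.exp (c * x + d)) x := by
  have h : HasDerivAt (fun y : ℝ => c * y + d) c x := by
    simpa using ((hasDerivAt_id x).const_mul c).add_const d
  simpa [mul_comm] using h.exp

set_option maxHeartbeats 2000000 in
/-- Covariance `R_t(s₁,s₂)` for `x′(t) = a·x(t) + b·x(t−τ)` (case `a ≠ 0`) with standard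
Wiener initial data, in the range `−s₁ < t ≤ τ − s₂`. -/
theorem covariance_dde_wiener_late_range_a_ne_zero
    (τ a b : ℝ) (hτ : 0 < τ) (ha : a ≠ 0) (s₁ s₂ : ℝ)
    (hs₁ : -τ ≤ s₁) (hs₁₂ : s₁ ≤ s₂) (hs₂ : s₂ ≤ 0)
    (t : ℝ) (ht₁ : -s₁ < t) (ht₂ : t ≤ τ - s₂) :
    ∫ r in (-τ)..0,
        (Real.exp (a * (t + s₁))
            + (b / a) * (Real.exp (a * max (t + s₁ - r - τ) 0) - 1))
          * (Real.exp (a * (t + s₂))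
              + (b / a) * (Real.exp (a * max (t + s₂ - r - τ) 0) - 1))
      = Real.exp (a * (2 * t + s₁ + s₂)) * τ
        + (b / a^2) * Real.exp (a * (t + s₁))
            * (Real.exp (a * (t + s₂)) - 1 - a * (t + s₂))
        + (b / a^2) * (Real.exp (a * (t + s₂)) - b / a)
            * (Real.exp (a * (t + s₁)) - 1 - a * (t + s₁))
        + (b^2 / (2 * a^3)) * Real.exp (a * (s₂ - s₁))
            * (Real.exp (a * (t + s₁)) - 1)^2 := by
  rw [show a * (2 * t + s₁ + s₂) = a * (t + s₁) + a * (t + s₂) from by ring, Real.exp_add]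
  have hZX : Real.exp (a * (s₂ - s₁)) * Real.exp (a * (t + s₁)) = Real.exp (a * (t + s₂)) := by
    rw [← Real.exp_add]; congr 1; ring
  set X := Real.exp (a * (t + s₁)) with hX
  set Y := Real.exp (a * (t + s₂)) with hY
  set Z := Real.exp (a * (s₂ - s₁)) with hZ
  set r₁ := t + s₁ - τ with hr₁
  set r₂ := t + s₂ - τ with hr₂
  have h1 : -τ ≤ r₁ := by rw [hr₁]; linarith
  have h12 : r₁ ≤ r₂ := by rw [hr₁, hr₂]; linarith
  have h2 : r₂ ≤ 0 := by rw [hr₂]; linarith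
  have hc : Continuous (fun r : ℝ =>
      (X + (b / a) * (Real.exp (a * max (t + s₁ - r - τ) 0) - 1))
        * (Y + (b / a) * (Real.exp (a * max (t + s₂ - r - τ) 0) - 1))) := by
    fun_prop
  have key1 : ∀ r ∈ Set.uIcc (-τ) r₁,
      HasDerivAt (fun r : ℝ =>
          (X - b/a) * (Y - b/a) * r
          - ((X - b/a) * (b/a) / a) * Real.exp ((-a) * r + a * (t + s₂ - τ))
          - ((Y - b/a) * (b/a) / a) * Real.exp ((-a) * r + a * (t + s₁ - τ))
          - ((b/a)^2 / (2*a)) * Real.exp ((-(2*a)) * r + a * (t + s₁ + t + s₂ - 2*τ)))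
        ((X + (b / a) * (Real.exp (a * max (t + s₁ - r - τ) 0) - 1))
          * (Y + (b / a) * (Real.exp (a * max (t + s₂ - r - τ) 0) - 1))) r := by
    intro r hr
    rw [Set.uIcc_of_le h1] at hr
    obtain ⟨hra, hrb⟩ := hr
    rw [hr₁] at hrb
    have hm1 : max (t + s₁ - r - τ) 0 = t + s₁ - r - τ := max_eq_left (by linarith)
    have hm2 : max (t + s₂ - r - τ) 0 = t + s₂ - r - τ := max_eq_left (by linarith)
    rw [hm1, hm2]
    have H := (((lin_deriv ((X - b/a) * (Y - b/a)) r).sub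
        ((exp_lin_deriv (-a) (a * (t + s₂ - τ)) r).const_mul ((X - b/a) * (b/a) / a))).sub
        ((exp_lin_deriv (-a) (a * (t + s₁ - τ)) r).const_mul ((Y - b/a) * (b/a) / a))).sub
        ((exp_lin_deriv (-(2*a)) (a * (t + s₁ + t + s₂ - 2*τ)) r).const_mul ((b/a)^2 / (2*a)))
    refine H.congr_deriv ?_
    rw [show (-a) * r + a * (t + s₂ - τ) = a * (t + s₂ - r - τ) from by ring,
        show (-a) * r + a * (t + s₁ - τ) = a * (t + s₁ - r - τ) from by ring,
        show (-(2*a)) * r + a * (t + s₁ + t + s₂ - 2*τ)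
          = a * (t + s₁ - r - τ) + a * (t + s₂ - r - τ) from by ring, Real.exp_add]
    field_simp
    ring
  have key2 : ∀ r ∈ Set.uIcc r₁ r₂,
      HasDerivAt (fun r : ℝ =>
          X * (Y - b/a) * r - (X * (b/a) / a) * Real.exp ((-a) * r + a * (t + s₂ - τ)))
        ((X + (b / a) * (Real.exp (a * max (t + s₁ - r - τ) 0) - 1))
          * (Y + (b / a) * (Real.exp (a * max (t + s₂ - r - τ) 0) - 1))) r := by
    intro r hr
    rw [Set.uIcc_of_le h12] at hr
    obtain ⟨hra, hrb⟩ := hr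
    rw [hr₁] at hra
    rw [hr₂] at hrb
    have hm1 : max (t + s₁ - r - τ) 0 = 0 := max_eq_right (by linarith)
    have hm2 : max (t + s₂ - r - τ) 0 = t + s₂ - r - τ := max_eq_left (by linarith)
    rw [hm1, hm2]
    have H := (lin_deriv (X * (Y - b/a)) r).sub
        ((exp_lin_deriv (-a) (a * (t + s₂ - τ)) r).const_mul (X * (b/a) / a))
    refine H.congr_deriv ?_
    rw [show (-a) * r + a * (t + s₂ - τ) = a * (t + s₂ - r - τ) from by ring]
    simp only [mul_zero, Real.exp_zero]
    field_simp
    ring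
  have key3 : ∀ r ∈ Set.uIcc r₂ 0,
      HasDerivAt (fun r : ℝ => X * Y * r)
        ((X + (b / a) * (Real.exp (a * max (t + s₁ - r - τ) 0) - 1))
          * (Y + (b / a) * (Real.exp (a * max (t + s₂ - r - τ) 0) - 1))) r := by
    intro r hr
    rw [Set.uIcc_of_le h2] at hr
    obtain ⟨hra, hrb⟩ := hr
    rw [hr₂] at hra
    have hm1 : max (t + s₁ - r - τ) 0 = 0 := max_eq_right (by linarith)
    have hm2 : max (t + s₂ - r - τ) 0 = 0 := max_eq_right (by linarith)
    rw [hm1, hm2]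
    simp only [mul_zero, Real.exp_zero]
    simpa using lin_deriv (X * Y) r
  have I1 := intervalIntegral.integral_eq_sub_of_hasDerivAt key1 (hc.intervalIntegrable (-τ) r₁)
  have I2 := intervalIntegral.integral_eq_sub_of_hasDerivAt key2 (hc.intervalIntegrable r₁ r₂)
  have I3 := intervalIntegral.integral_eq_sub_of_hasDerivAt key3 (hc.intervalIntegrable r₂ 0)
  rw [← intervalIntegral.integral_add_adjacent_intervals (hc.intervalIntegrable (-τ) r₁)
        (hc.intervalIntegrable r₁ 0),
      ← intervalIntegral.integral_add_adjacent_intervals (hc.intervalIntegrable r₁ r₂)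
        (hc.intervalIntegrable r₂ 0), I1, I2, I3]
  have E1 : Real.exp ((-a) * r₁ + a * (t + s₂ - τ)) = Z := by
    rw [hr₁, hZ]; congr 1; ring
  have E2 : Real.exp ((-a) * r₁ + a * (t + s₁ - τ)) = 1 := by
    rw [hr₁, ← Real.exp_zero]; congr 1; ring
  have E3 : Real.exp ((-(2*a)) * r₁ + a * (t + s₁ + t + s₂ - 2*τ)) = Z := by
    rw [hr₁, hZ]; congr 1; ring
  have E4 : Real.exp ((-a) * (-τ) + a * (t + s₂ - τ)) = Y := by
    rw [hY]; congr 1; ring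
  have E5 : Real.exp ((-a) * (-τ) + a * (t + s₁ - τ)) = X := by
    rw [hX]; congr 1; ring
  have E6 : Real.exp ((-(2*a)) * (-τ) + a * (t + s₁ + t + s₂ - 2*τ)) = X * Y := by
    rw [hX, hY, ← Real.exp_add]; congr 1; ring
  have E7 : Real.exp ((-a) * r₂ + a * (t + s₂ - τ)) = 1 := by
    rw [hr₂, ← Real.exp_zero]; congr 1; ring
  rw [E1, E2, E3, E4, E5, E6, E7, hr₁, hr₂, ← hZX]
  field_simp
  ring
end
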